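/- Let N̂ ≤ N be integers with N̂ ≥ 2, let γ_N > 0, and set α(N) := 1 − γ_N^{N−N̂+2}/(γ_N+1)^{N−N̂}. Let δ ∈ [0, 1−α(N)), let ϑ > 0, and let Ñ ≥ N̂ be an integer with Ñ ≥ N̂ + (ln((γ_N/(γ_N+1))^{N−N̂} − δ/γ_N²) − 2·ln(ϑ))/(ln(ϑ·γ_N) − ln(ϑ·γ_N + 1)). Then for every γ_Ñ with 0 < γ_Ñ ≤ ϑ·γ_N, the quantity α(Ñ) := 1 − γ_Ñ^{Ñ−N̂+2}/(γ_Ñ+1)^{Ñ−N̂} satisfies α(Ñ) ≥ α(N) + δ. -/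

import Mathlib

/-- Lemma: monotone improvement of the suboptimality degree.
With `α(N) = 1 − γ_N^{N−N̂+2}/(γ_N+1)^{N−N̂}`, `δ ∈ [0, 1−α(N))`, `ϑ > 0`, and
`Ñ ≥ N̂ + (ln((γ_N/(γ_N+1))^{N−N̂} − δ/γ_N²) − 2 ln ϑ)/(ln(ϑγ_N) − ln(ϑγ_N+1))`,
any `0 < γ_Ñ ≤ ϑ γ_N` yields `α(Ñ) = 1 − γ_Ñ^{Ñ−N̂+2}/(γ_Ñ+1)^{Ñ−N̂} ≥ α(N) + δ`. -/
theorem statement9 (Nhat N : ℕ) (hNhat : 2 ≤ Nhat) (hNN : Nhat ≤ N)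
    (γN : ℝ) (hγN : 0 < γN)
    (δ : ℝ) (hδ0 : 0 ≤ δ)
    (hδ1 : δ < 1 - (1 - γN ^ (N - Nhat + 2) / (γN + 1) ^ (N - Nhat)))
    (ϑ : ℝ) (hϑ : 0 < ϑ)
    (Ntil : ℕ) (hNtil : Nhat ≤ Ntil)
    (hNtil' : (Nhat : ℝ) +
        (Real.log ((γN / (γN + 1)) ^ (N - Nhat) - δ / γN ^ 2) - 2 * Real.log ϑ) /
          (Real.log (ϑ * γN) - Real.log (ϑ * γN + 1))
      ≤ (Ntil : ℝ)) :
    ∀ γNtil : ℝ, 0 < γNtil → γNtil ≤ ϑ * γN →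
      (1 - γN ^ (N - Nhat + 2) / (γN + 1) ^ (N - Nhat)) + δ
        ≤ 1 - γNtil ^ (Ntil - Nhat + 2) / (γNtil + 1) ^ (Ntil - Nhat) := by
  intro x hx hxa
  set M := N - Nhat with hM
  set K := Ntil - Nhat with hK
  have ha : 0 < ϑ * γN := mul_pos hϑ hγN
  have hx1 : 0 < x + 1 := by linarith
  have ha1 : 0 < ϑ * γN + 1 := by linarith
  have hγ1 : 0 < γN + 1 := by linarith
  have hγ2 : (0:ℝ) < γN ^ 2 := by positivity
  have hδ1' : δ < γN ^ (M + 2) / (γN + 1) ^ M := by linarith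
  have hsplit : γN ^ (M + 2) / (γN + 1) ^ M = γN ^ 2 * (γN / (γN + 1)) ^ M := by
    rw [div_pow]; field_simp; ring
  have hC : 0 < (γN / (γN + 1)) ^ M - δ / γN ^ 2 := by
    rw [hsplit, mul_comm] at hδ1'
    rw [sub_pos, div_lt_iff₀ hγ2]
    linarith
  -- monotonicity of x ↦ x^(K+2)/(x+1)^K
  have hr : x / (x + 1) ≤ ϑ * γN / (ϑ * γN + 1) := by
    rw [div_le_div_iff₀ hx1 ha1]; nlinarith
  have hmono : x ^ (K + 2) / (x + 1) ^ K ≤ (ϑ * γN) ^ (K + 2) / (ϑ * γN + 1) ^ K := by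
    have h1 : x ^ (K + 2) / (x + 1) ^ K = x ^ 2 * (x / (x + 1)) ^ K := by
      rw [div_pow]; field_simp; ring
    have h2 : (ϑ * γN) ^ (K + 2) / (ϑ * γN + 1) ^ K
        = (ϑ * γN) ^ 2 * (ϑ * γN / (ϑ * γN + 1)) ^ K := by
      rw [div_pow]; field_simp; ring
    rw [h1, h2]
    apply mul_le_mul (pow_le_pow_left₀ hx.le hxa 2)
      (pow_le_pow_left₀ (by positivity) hr K) (by positivity) (by positivity)
  -- log step
  have hlogneg : Real.log (ϑ * γN) - Real.log (ϑ * γN + 1) < 0 := by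
    have := Real.log_lt_log ha (by linarith : ϑ * γN < ϑ * γN + 1)
    linarith
  have hKcast : ((K : ℕ) : ℝ) = (Ntil : ℝ) - (Nhat : ℝ) := by
    rw [hK, Nat.cast_sub hNtil]
  have hQK : (Real.log ((γN / (γN + 1)) ^ M - δ / γN ^ 2) - 2 * Real.log ϑ) /
      (Real.log (ϑ * γN) - Real.log (ϑ * γN + 1)) ≤ (K : ℝ) := by
    rw [hKcast]; linarith
  have hKge : (K : ℝ) * (Real.log (ϑ * γN) - Real.log (ϑ * γN + 1))
      ≤ Real.log ((γN / (γN + 1)) ^ M - δ / γN ^ 2) - 2 * Real.log ϑ := by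
    rw [div_le_iff_of_neg hlogneg] at hQK
    linarith
  have key : ϑ ^ 2 * (ϑ * γN / (ϑ * γN + 1)) ^ K ≤ (γN / (γN + 1)) ^ M - δ / γN ^ 2 := by
    rw [← Real.log_le_log_iff (by positivity) hC,
      Real.log_mul (by positivity) (by positivity), Real.log_pow, Real.log_pow,
      Real.log_div ha.ne' ha1.ne']
    push_cast
    linarith
  have hfin : (ϑ * γN) ^ (K + 2) / (ϑ * γN + 1) ^ K ≤ γN ^ (M + 2) / (γN + 1) ^ M - δ := by
    have h2 : (ϑ * γN) ^ (K + 2) / (ϑ * γN + 1) ^ K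
        = γN ^ 2 * (ϑ ^ 2 * (ϑ * γN / (ϑ * γN + 1)) ^ K) := by
      rw [div_pow]; field_simp; ring
    have h3 : γN ^ 2 * ((γN / (γN + 1)) ^ M - δ / γN ^ 2)
        = γN ^ 2 * (γN / (γN + 1)) ^ M - δ := by
      field_simp
    have := mul_le_mul_of_nonneg_left key (le_of_lt hγ2)
    rw [h2, hsplit]
    linarith
  linarith
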